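/- Robustness inequality (Section 4.2 and Supplementary C.3): Assume (A1)–(A3), (A5), (A6), the MSM, and either (A4.1) or (A4.2). Then |θ_rsw^(m) − θ^(K)| ≥ |θ_sw^(m) − θ^(K)|; that is, the limit of the SW estimator is at least as close to the effect of the entire treatment history as the limit of the RSW estimator. -/

import Mathlib

open MeasureTheory Finset
open scoped Classical

namespace MSMPaper

noncomputable section

variable {Ω : Type*} [MeasurableSpace Ω] {𝓛 : Type*}

/-- Conditional probability `P(E | F) = P(E ∩ F) / P(F)` as a real number
(junk value `0` when `P F = 0`). -/
def cP (P : Measure Ω) (E F : Set Ω) : ℝ := (P (E ∩ F)).toReal / (P F).toReal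

variable {K : ℕ}

/-- Event `Ā(t−1) = b̄` (treatment history up to, not including, time `t`). -/
def Apast (A : Fin K → Ω → Bool) (t : ℕ) (b : Fin K → Bool) : Set Ω :=
  {ω | ∀ k : Fin K, (k : ℕ) < t → A k ω = b k}

/-- Event `L̄(t) = l̄` (covariate history up to and including time `t`). -/
def Lpast (L : Fin K → Ω → 𝓛) (t : ℕ) (l : Fin K → 𝓛) : Set Ω :=
  {ω | ∀ k : Fin K, (k : ℕ) ≤ t → L k ω = l k}

/-- Event `A̲(s, t−1) = b` (treatment history from time `s` up to, not including, `t`). -/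
def Aseg (A : Fin K → Ω → Bool) (s t : ℕ) (b : Fin K → Bool) : Set Ω :=
  {ω | ∀ k : Fin K, s ≤ (k : ℕ) → (k : ℕ) < t → A k ω = b k}

/-- Event `A̲(K−m) = a̲` for a (last-`m`) treatment vector `as`. -/
def EtrV (A : Fin K → Ω → Bool) (m : ℕ) (as : Fin K → Bool) : Set Ω :=
  {ω | ∀ k : Fin K, K - m ≤ (k : ℕ) → A k ω = as k}

/-- Event `A̲(K−m) = a_m` (constant `a` on the last `m` coordinates). -/
def Etr (A : Fin K → Ω → Bool) (m : ℕ) (a : Bool) : Set Ω :=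
  EtrV A m (fun _ => a)

/-- Stabilized weights `W_sw`. -/
def Wsw (P : Measure Ω) (A : Fin K → Ω → Bool) (L : Fin K → Ω → 𝓛) : Ω → ℝ :=
  fun ω => ∏ k : Fin K,
    cP P {ω' | A k ω' = A k ω} (Apast A (k : ℕ) (fun j => A j ω)) /
      cP P {ω' | A k ω' = A k ω}
        (Lpast L (k : ℕ) (fun j => L j ω) ∩ Apast A (k : ℕ) (fun j => A j ω))

/-- Restricted stabilized weights `W_rsw^(m)`. -/
def Wrsw (P : Measure Ω) (A : Fin K → Ω → Bool) (L : Fin K → Ω → 𝓛) (m : ℕ) : Ω → ℝ :=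
  fun ω => ∏ k ∈ Finset.univ.filter (fun k : Fin K => K - m ≤ (k : ℕ)),
    cP P {ω' | A k ω' = A k ω} (Aseg A (K - m) (k : ℕ) (fun j => A j ω)) /
      cP P {ω' | A k ω' = A k ω}
        (Lpast L (k : ℕ) (fun j => L j ω) ∩ Apast A (k : ℕ) (fun j => A j ω))

/-- Partial stabilized weights `W_psw^(m)`. -/
def Wpsw (P : Measure Ω) (A : Fin K → Ω → Bool) (L : Fin K → Ω → 𝓛) (m : ℕ) : Ω → ℝ :=
  fun ω => ∏ k ∈ Finset.univ.filter (fun k : Fin K => K - m ≤ (k : ℕ)),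
    cP P {ω' | A k ω' = A k ω} (Apast A (k : ℕ) (fun j => A j ω)) /
      cP P {ω' | A k ω' = A k ω}
        (Lpast L (k : ℕ) (fun j => L j ω) ∩ Apast A (k : ℕ) (fun j => A j ω))

/-- IP-weighted contrast `θ_W^(m)`. -/
def θW (P : Measure Ω) (A : Fin K → Ω → Bool) (m : ℕ) (W Y : Ω → ℝ) : ℝ :=
  (∫ ω in Etr A m true, W ω * Y ω ∂P) / (∫ ω in Etr A m true, W ω ∂P) -
    (∫ ω in Etr A m false, W ω * Y ω ∂P) / (∫ ω in Etr A m false, W ω ∂P)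

/-- `rev j` is the time index `K − 1 − j`; the paper's coefficient `ψ_{j+1}`
multiplies `a(K − (j+1)) = a(rev j)`. -/
def rev (j : Fin K) : Fin K := ⟨K - 1 - (j : ℕ), by have := j.isLt; omega⟩

/-- `θ^(K) = 𝔼[Y^{1_K}] − 𝔼[Y^{0_K}]`. -/
def θKfull (P : Measure Ω) (Ypot : (Fin K → Bool) → Ω → ℝ) : ℝ :=
  (∫ ω, Ypot (fun _ => true) ω ∂P) - ∫ ω, Ypot (fun _ => false) ω ∂P

/-- (A1) consistency. -/
def A1ok (A : Fin K → Ω → Bool) (Y : Ω → ℝ) (Ypot : (Fin K → Bool) → Ω → ℝ) : Prop :=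
  ∀ (a : Fin K → Bool) (ω : Ω), (∀ k, A k ω = a k) → Y ω = Ypot a ω

/-- (A2) sequential exchangeability. -/
def A2ok (P : Measure Ω) (A : Fin K → Ω → Bool) (L : Fin K → Ω → 𝓛)
    (Ypot : (Fin K → Bool) → Ω → ℝ) : Prop :=
  ∀ (t : Fin K) (a : Fin K → Bool) (B : Set ℝ), MeasurableSet B →
    ∀ (av : Bool) (l : Fin K → 𝓛) (b : Fin K → Bool),
      0 < P (Lpast L (t : ℕ) l ∩ Apast A (t : ℕ) b) →
      cP P ({ω | Ypot a ω ∈ B} ∩ {ω | A t ω = av}) (Lpast L (t : ℕ) l ∩ Apast A (t : ℕ) b) =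
        cP P {ω | Ypot a ω ∈ B} (Lpast L (t : ℕ) l ∩ Apast A (t : ℕ) b) *
          cP P {ω | A t ω = av} (Lpast L (t : ℕ) l ∩ Apast A (t : ℕ) b)

/-- (A3) positivity. -/
def A3ok (P : Measure Ω) (A : Fin K → Ω → Bool) (L : Fin K → Ω → 𝓛) : Prop :=
  ∀ (t : Fin K) (av : Bool) (l : Fin K → 𝓛) (b : Fin K → Bool),
    0 < P (Lpast L (t : ℕ) l ∩ Apast A (t : ℕ) b) →
    0 < cP P {ω | A t ω = av} (Lpast L (t : ℕ) l ∩ Apast A (t : ℕ) b)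

/-- The marginal structural model `𝔼[Y^{ā}] = ψ₀ + Σ_{j=1}^K ψ_j a(K−j)`;
here `ψ j` is the paper's `ψ_{j+1}`, the coefficient of `a(K−1−j)`. -/
def MSMeq (P : Measure Ω) (Ypot : (Fin K → Bool) → Ω → ℝ) (ψ0 : ℝ) (ψ : Fin K → ℝ) : Prop :=
  ∀ a : Fin K → Bool,
    (∫ ω, Ypot a ω ∂P) = ψ0 + ∑ j : Fin K, ψ j * (if a (rev j) = true then 1 else 0)

/-- (A5) conditional MSM given the past treatment history `Ā(K−m−1)`. -/
def A5ok (P : Measure Ω) (A : Fin K → Ω → Bool) (Ypot : (Fin K → Bool) → Ω → ℝ)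
    (m : ℕ) : Prop :=
  ∀ b : Fin K → Bool, 0 < P (Apast A (K - m) b) →
    ∃ (φ0 : ℝ) (φ : Fin K → ℝ), ∀ a : Fin K → Bool,
      (∫ ω in Apast A (K - m) b, Ypot a ω ∂P) / (P (Apast A (K - m) b)).toReal =
        φ0 + ∑ j : Fin K, φ j * (if a (rev j) = true then 1 else 0)

/-- `q_{j+1} = P(A(K−1−j)=1 | A̲(K−m)=1_m) − P(A(K−1−j)=1 | A̲(K−m)=0_m)`. -/
def qcoef (P : Measure Ω) (A : Fin K → Ω → Bool) (m : ℕ) (j : Fin K) : ℝ :=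
  cP P {ω | A (rev j) ω = true} (Etr A m true) -
    cP P {ω | A (rev j) ω = true} (Etr A m false)

end

set_option linter.unusedSectionVars false
set_option linter.unnecessarySimpa false

noncomputable section Aux

variable {Ω : Type*} [MeasurableSpace Ω] {𝓛 : Type*} [MeasurableSpace 𝓛]
  [Fintype 𝓛] [Nonempty 𝓛] [MeasurableSingletonClass 𝓛] {K : ℕ}

/-- Event `L̄(t−1) = l̄` (covariates strictly before `t`). -/
def Lup (L : Fin K → Ω → 𝓛) (t : ℕ) (l : Fin K → 𝓛) : Set Ω :=
  {ω | ∀ k : Fin K, (k : ℕ) < t → L k ω = l k}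

lemma ms_eqA (A : Fin K → Ω → Bool) (hA : ∀ k, Measurable (A k)) (k : Fin K) (x : Bool) :
    MeasurableSet {ω | A k ω = x} := (hA k) (measurableSet_singleton x)

lemma ms_eqL (L : Fin K → Ω → 𝓛) (hL : ∀ k, Measurable (L k)) (k : Fin K) (x : 𝓛) :
    MeasurableSet {ω | L k ω = x} := (hL k) (measurableSet_singleton x)

lemma ms_Apast (A : Fin K → Ω → Bool) (hA : ∀ k, Measurable (A k)) (t : ℕ) (b : Fin K → Bool) :
    MeasurableSet (Apast A t b) := by
  have : Apast A t b = ⋂ k : Fin K, {ω | (k : ℕ) < t → A k ω = b k} := by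
    ext ω; simp [Apast, Set.mem_iInter]
  rw [this]
  refine MeasurableSet.iInter fun k => ?_
  by_cases h : (k : ℕ) < t
  · simp only [h, forall_true_left]; exact ms_eqA A hA k (b k)
  · simp only [h]; simpa using MeasurableSet.univ

lemma ms_Lup (L : Fin K → Ω → 𝓛) (hL : ∀ k, Measurable (L k)) (t : ℕ) (l : Fin K → 𝓛) :
    MeasurableSet (Lup L t l) := by
  have : Lup L t l = ⋂ k : Fin K, {ω | (k : ℕ) < t → L k ω = l k} := by
    ext ω; simp [Lup, Set.mem_iInter]
  rw [this]
  refine MeasurableSet.iInter fun k => ?_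
  by_cases h : (k : ℕ) < t
  · simp only [h, forall_true_left]; exact ms_eqL L hL k (l k)
  · simp only [h]; simpa using MeasurableSet.univ

lemma Lpast_eq_Lup (L : Fin K → Ω → 𝓛) (t : ℕ) (l : Fin K → 𝓛) :
    Lpast L t l = Lup L (t + 1) l := by
  ext ω; constructor <;> intro h k hk
  · exact h k (by omega)
  · exact h k (by omega)

lemma ms_Lpast (L : Fin K → Ω → 𝓛) (hL : ∀ k, Measurable (L k)) (t : ℕ) (l : Fin K → 𝓛) :
    MeasurableSet (Lpast L t l) := by
  rw [Lpast_eq_Lup]; exact ms_Lup L hL _ l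

lemma ms_Aseg (A : Fin K → Ω → Bool) (hA : ∀ k, Measurable (A k)) (s t : ℕ) (b : Fin K → Bool) :
    MeasurableSet (Aseg A s t b) := by
  have : Aseg A s t b = ⋂ k : Fin K, {ω | s ≤ (k : ℕ) → (k : ℕ) < t → A k ω = b k} := by
    ext ω; simp [Aseg, Set.mem_iInter]
  rw [this]
  refine MeasurableSet.iInter fun k => ?_
  by_cases h : s ≤ (k : ℕ) ∧ (k : ℕ) < t
  · have : {ω : Ω | s ≤ (k:ℕ) → (k:ℕ) < t → A k ω = b k} = {ω | A k ω = b k} := by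
      ext ω; simp [h.1, h.2]
    rw [this]; exact ms_eqA A hA k (b k)
  · have : {ω : Ω | s ≤ (k:ℕ) → (k:ℕ) < t → A k ω = b k} = Set.univ := by
      ext ω; simp only [Set.mem_setOf_eq, Set.mem_univ, iff_true]
      intro h1 h2; exact absurd ⟨h1, h2⟩ h
    rw [this]; exact MeasurableSet.univ

lemma ms_EtrV (A : Fin K → Ω → Bool) (hA : ∀ k, Measurable (A k)) (m : ℕ) (as : Fin K → Bool) :
    MeasurableSet (EtrV A m as) := by
  have : EtrV A m as = Aseg A (K - m) K as := by
    ext ω; constructor <;> intro h k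
    · intro hk _; exact h k hk
    · intro hk; exact h k hk k.isLt
  rw [this]; exact ms_Aseg A hA _ _ as

lemma ms_Etr (A : Fin K → Ω → Bool) (hA : ∀ k, Measurable (A k)) (m : ℕ) (a : Bool) :
    MeasurableSet (Etr A m a) := ms_EtrV A hA m _

lemma cP_nonneg (P : Measure Ω) (E F : Set Ω) : 0 ≤ cP P E F :=
  div_nonneg ENNReal.toReal_nonneg ENNReal.toReal_nonneg

lemma cP_of_null (P : Measure Ω) (E F : Set Ω) (h : P F = 0) : cP P E F = 0 := by
  simp [cP, h]

/-- The key "stripping" property of a function `f` (valid for potential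
outcomes by (A2), and trivially for constants). -/
def StripOK (P : Measure Ω) (A : Fin K → Ω → Bool) (L : Fin K → Ω → 𝓛) (f : Ω → ℝ) : Prop :=
  ∀ (t : Fin K) (av : Bool) (l : Fin K → 𝓛) (b : Fin K → Bool),
    ∫ ω in (Lpast L (t : ℕ) l ∩ Apast A (t : ℕ) b) ∩ {ω | A t ω = av}, f ω ∂P =
      cP P {ω | A t ω = av} (Lpast L (t : ℕ) l ∩ Apast A (t : ℕ) b) *
        ∫ ω in Lpast L (t : ℕ) l ∩ Apast A (t : ℕ) b, f ω ∂P

lemma stripOK_const (P : Measure Ω) [IsProbabilityMeasure P]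
    (A : Fin K → Ω → Bool) (L : Fin K → Ω → 𝓛) :
    StripOK P A L (fun _ => (1 : ℝ)) := by
  intro t av l b
  set C := Lpast L (t : ℕ) l ∩ Apast A (t : ℕ) b with hC
  by_cases h0 : P C = 0
  · have h1 : P (C ∩ {ω | A t ω = av}) = 0 :=
      measure_mono_null Set.inter_subset_left h0
    simp [cP, h0, h1, measureReal_def]
  · simp only [MeasureTheory.setIntegral_const, smul_eq_mul, mul_one]
    rw [cP, Set.inter_comm, measureReal_def, measureReal_def, div_mul_cancel₀]
    exact ENNReal.toReal_ne_zero.mpr ⟨h0, measure_ne_top P C⟩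


lemma stripOK_pot (P : Measure Ω) [IsProbabilityMeasure P]
    (A : Fin K → Ω → Bool) (L : Fin K → Ω → 𝓛)
    (Ypot : (Fin K → Bool) → Ω → ℝ) (hYpm : ∀ a, Measurable (Ypot a))
    (hA2 : A2ok P A L Ypot) (a : Fin K → Bool) :
    StripOK P A L (Ypot a) := by
  intro t av l b
  set C := Lpast L (t : ℕ) l ∩ Apast A (t : ℕ) b with hCdef
  by_cases h0 : P C = 0
  · have h1 : P (C ∩ {ω | A t ω = av}) = 0 :=
      measure_mono_null Set.inter_subset_left h0
    rw [cP_of_null _ _ _ h0, zero_mul, Measure.restrict_eq_zero.mpr h1, integral_zero_measure]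
  · have hpos : 0 < P C := lt_of_le_of_ne zero_le (Ne.symm h0)
    set c := cP P {ω | A t ω = av} C with hcdef
    have hc0 : 0 ≤ c := cP_nonneg _ _ _
    have hPCt : (P C).toReal ≠ 0 := ENNReal.toReal_ne_zero.mpr ⟨h0, measure_ne_top P C⟩
    have hmapeq : Measure.map (Ypot a) (P.restrict (C ∩ {ω | A t ω = av})) =
        ENNReal.ofReal c • Measure.map (Ypot a) (P.restrict C) := by
      ext B hB
      rw [Measure.map_apply (hYpm a) hB, Measure.smul_apply,
        Measure.map_apply (hYpm a) hB, Measure.restrict_apply (hYpm a hB),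
        Measure.restrict_apply (hYpm a hB), smul_eq_mul]
      have key := hA2 t a B hB av l b hpos
      have hsets : Ypot a ⁻¹' B ∩ (C ∩ {ω | A t ω = av}) =
          ({ω | Ypot a ω ∈ B} ∩ {ω | A t ω = av}) ∩ C := by
        ext ω; simp only [Set.mem_inter_iff, Set.mem_preimage, Set.mem_setOf_eq]; tauto
      have hsets2 : Ypot a ⁻¹' B ∩ C = {ω | Ypot a ω ∈ B} ∩ C := rfl
      rw [hsets, hsets2]
      have hreal : (P (({ω | Ypot a ω ∈ B} ∩ {ω | A t ω = av}) ∩ C)).toReal =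
          c * (P ({ω | Ypot a ω ∈ B} ∩ C)).toReal := by
        have h2 := key
        rw [cP, cP] at h2
        rw [div_eq_iff hPCt] at h2
        rw [h2, hcdef, ← hCdef]; field_simp
      have hfin1 : P (({ω | Ypot a ω ∈ B} ∩ {ω | A t ω = av}) ∩ C) ≠ ⊤ := measure_ne_top _ _
      have hfin2 : ENNReal.ofReal c * P ({ω | Ypot a ω ∈ B} ∩ C) ≠ ⊤ :=
        ENNReal.mul_ne_top ENNReal.ofReal_ne_top (measure_ne_top _ _)
      refine (ENNReal.toReal_eq_toReal_iff' hfin1 hfin2).mp ?_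
      rw [ENNReal.toReal_mul, ENNReal.toReal_ofReal hc0]
      exact hreal
    have hmI : ∀ (S : Set Ω), ∫ ω in S, Ypot a ω ∂P =
        ∫ y, y ∂(Measure.map (Ypot a) (P.restrict S)) := fun S =>
      (integral_map (hYpm a).aemeasurable measurable_id.aestronglyMeasurable).symm
    rw [hmI, hmI, hmapeq, integral_smul_measure, ENNReal.toReal_ofReal hc0, smul_eq_mul]
lemma sum_update (t : Fin K) (G : (Fin K → 𝓛) → ℝ) :
    ∑ l : Fin K → 𝓛, ∑ x : 𝓛, G (Function.update l t x) =
      (Fintype.card 𝓛 : ℝ) * ∑ l : Fin K → 𝓛, G l := by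
  have hinv : Function.Involutive
      (fun p : (Fin K → 𝓛) × 𝓛 => (Function.update p.1 t p.2, p.1 t)) := by
    intro p
    simp only [Function.update_self, Function.update_idem, Function.update_eq_self]
  calc ∑ l : Fin K → 𝓛, ∑ x : 𝓛, G (Function.update l t x)
      = ∑ p : (Fin K → 𝓛) × 𝓛, G (Function.update p.1 t p.2) := by
        rw [Fintype.sum_prod_type]
    _ = ∑ p : (Fin K → 𝓛) × 𝓛, (fun q : (Fin K → 𝓛) × 𝓛 => G q.1) (hinv.toPerm _ p) := rfl
    _ = ∑ q : (Fin K → 𝓛) × 𝓛, G q.1 := Equiv.sum_comp (hinv.toPerm _) (fun q => G q.1)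
    _ = (Fintype.card 𝓛 : ℝ) * ∑ l : Fin K → 𝓛, G l := by
        rw [Fintype.sum_prod_type]
        simp only [Finset.sum_const, card_univ, nsmul_eq_mul]
        rw [← Finset.mul_sum]

lemma Lup_update (L : Fin K → Ω → 𝓛) (t : Fin K) (l : Fin K → 𝓛) (x : 𝓛) (S : Set Ω) :
    Lup L (t : ℕ) l ∩ S ∩ {ω | L t ω = x} =
      Lup L ((t : ℕ) + 1) (Function.update l t x) ∩ S := by
  ext ω
  simp only [Set.mem_inter_iff, Set.mem_setOf_eq, Lup]
  constructor
  · rintro ⟨⟨h1, h2⟩, h3⟩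
    refine ⟨fun k hk => ?_, h2⟩
    by_cases hkt : k = t
    · subst hkt; rw [Function.update_self]; exact h3
    · rw [Function.update_of_ne hkt]
      exact h1 k (by
        have : (k : ℕ) ≠ (t : ℕ) := fun h => hkt (Fin.ext h)
        omega)
  · rintro ⟨h1, h2⟩
    have ht : L t ω = x := by
      have := h1 t (by omega)
      rwa [Function.update_self] at this
    exact ⟨⟨fun k hk => by
      have hkt : k ≠ t := fun h => by subst h; omega
      have := h1 k (by omega)
      rwa [Function.update_of_ne hkt] at this, h2⟩, ht⟩

lemma merge_step (P : Measure Ω) [IsProbabilityMeasure P]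
    (L : Fin K → Ω → 𝓛) (hL : ∀ k, Measurable (L k))
    (f : Ω → ℝ) (hf : Integrable f P) (t : Fin K) (S : Set Ω) (hS : MeasurableSet S)
    (F : (Fin K → 𝓛) → ℝ) (hF : ∀ l x, F (Function.update l t x) = F l) :
    ∑ l : Fin K → 𝓛, F l * ∫ ω in Lup L (t : ℕ) l ∩ S, f ω ∂P =
      (Fintype.card 𝓛 : ℝ) *
        ∑ l : Fin K → 𝓛, F l * ∫ ω in Lup L ((t : ℕ) + 1) l ∩ S, f ω ∂P := by
  have hsplit : ∀ l : Fin K → 𝓛, ∫ ω in Lup L (t : ℕ) l ∩ S, f ω ∂P =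
      ∑ x : 𝓛, ∫ ω in Lup L ((t : ℕ) + 1) (Function.update l t x) ∩ S, f ω ∂P := by
    intro l
    have hunion : Lup L (t : ℕ) l ∩ S =
        ⋃ x ∈ (Finset.univ : Finset 𝓛),
          (Lup L ((t : ℕ) + 1) (Function.update l t x) ∩ S) := by
      ext ω
      simp only [Set.mem_iUnion, Finset.mem_univ, exists_true_left, exists_prop, true_and]
      constructor
      · intro h
        exact ⟨L t ω, by rw [← Lup_update]; exact ⟨h, rfl⟩⟩
      · rintro ⟨x, hx⟩
        rw [← Lup_update] at hx
        exact hx.1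
    rw [hunion, integral_biUnion_finset]
    · intro x _
      exact ((ms_Lup L hL _ _).inter hS)
    · intro x _ y _ hxy
      have : ∀ ω, ω ∈ Lup L ((t : ℕ) + 1) (Function.update l t x) ∩ S →
          ω ∈ Lup L ((t : ℕ) + 1) (Function.update l t y) ∩ S → False := by
        intro ω h1 h2
        rw [← Lup_update] at h1 h2
        exact hxy (h1.2.symm.trans h2.2)
      exact fun u hu1 hu2 ω hω => absurd (hu2 hω) (fun h2 => this ω (hu1 hω) h2)
    · intro x _
      exact hf.integrableOn
  calc ∑ l : Fin K → 𝓛, F l * ∫ ω in Lup L (t : ℕ) l ∩ S, f ω ∂P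
      = ∑ l : Fin K → 𝓛, ∑ x : 𝓛,
          F (Function.update l t x) *
            ∫ ω in Lup L ((t : ℕ) + 1) (Function.update l t x) ∩ S, f ω ∂P := by
        refine Finset.sum_congr rfl fun l _ => ?_
        rw [hsplit l, Finset.mul_sum]
        exact Finset.sum_congr rfl fun x _ => by rw [hF]
    _ = (Fintype.card 𝓛 : ℝ) * ∑ l : Fin K → 𝓛,
          F l * ∫ ω in Lup L ((t : ℕ) + 1) l ∩ S, f ω ∂P :=
        sum_update t (fun l' => F l' * ∫ ω in Lup L ((t : ℕ) + 1) l' ∩ S, f ω ∂P)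
def dW (P : Measure Ω) (A : Fin K → Ω → Bool) (L : Fin K → Ω → 𝓛)
    (b : Fin K → Bool) (l : Fin K → 𝓛) (k : Fin K) : ℝ :=
  cP P {ω | A k ω = b k} (Lpast L (k : ℕ) l ∩ Apast A (k : ℕ) b)

def Dprod (P : Measure Ω) (A : Fin K → Ω → Bool) (L : Fin K → Ω → 𝓛)
    (b : Fin K → Bool) (s t : ℕ) (l : Fin K → 𝓛) : ℝ :=
  ∏ k ∈ Finset.univ.filter (fun k : Fin K => s ≤ (k : ℕ) ∧ (k : ℕ) < t), dW P A L b l k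

lemma Dprod_of_le (P : Measure Ω) (A : Fin K → Ω → Bool) (L : Fin K → Ω → 𝓛)
    (b : Fin K → Bool) (s t : ℕ) (hts : t ≤ s) (l : Fin K → 𝓛) :
    Dprod P A L b s t l = 1 := by
  rw [Dprod]
  have : Finset.univ.filter (fun k : Fin K => s ≤ (k : ℕ) ∧ (k : ℕ) < t) = ∅ := by
    ext k; simp only [Finset.mem_filter, Finset.mem_univ, true_and, Finset.notMem_empty,
      iff_false]
    omega
  rw [this, Finset.prod_empty]

lemma Dprod_succ (P : Measure Ω) (A : Fin K → Ω → Bool) (L : Fin K → Ω → 𝓛)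
    (b : Fin K → Bool) (s t : ℕ) (ht : t < K) (hst : s ≤ t) (l : Fin K → 𝓛) :
    Dprod P A L b s (t + 1) l = Dprod P A L b s t l * dW P A L b l ⟨t, ht⟩ := by
  rw [Dprod, Dprod]
  have : Finset.univ.filter (fun k : Fin K => s ≤ (k : ℕ) ∧ (k : ℕ) < t + 1) =
      insert ⟨t, ht⟩ (Finset.univ.filter (fun k : Fin K => s ≤ (k : ℕ) ∧ (k : ℕ) < t)) := by
    ext k
    simp only [Finset.mem_filter, Finset.mem_univ, true_and, Finset.mem_insert, Fin.ext_iff]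
    omega
  rw [this, Finset.prod_insert (by simp)]
  ring

lemma Lpast_update (L : Fin K → Ω → 𝓛) (k tt : Fin K) (h : (k : ℕ) < (tt : ℕ))
    (l : Fin K → 𝓛) (x : 𝓛) :
    Lpast L (k : ℕ) (Function.update l tt x) = Lpast L (k : ℕ) l := by
  ext ω
  constructor <;> intro hω j hj
  · have hjt : j ≠ tt := fun he => by subst he; omega
    have := hω j hj
    rwa [Function.update_of_ne hjt] at this
  · have hjt : j ≠ tt := fun he => by subst he; omega
    rw [Function.update_of_ne hjt]
    exact hω j hj

lemma Dprod_update (P : Measure Ω) (A : Fin K → Ω → Bool) (L : Fin K → Ω → 𝓛)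
    (b : Fin K → Bool) (s t : ℕ) (ht : t < K) (l : Fin K → 𝓛) (x : 𝓛) :
    Dprod P A L b s t (Function.update l ⟨t, ht⟩ x) = Dprod P A L b s t l := by
  rw [Dprod, Dprod]
  refine Finset.prod_congr rfl fun k hk => ?_
  simp only [Finset.mem_filter, Finset.mem_univ, true_and] at hk
  rw [dW, dW, Lpast_update L k ⟨t, ht⟩ (by exact hk.2) l x]

lemma Apast_succ (A : Fin K → Ω → Bool) (tt : Fin K) (b : Fin K → Bool) :
    Apast A ((tt : ℕ) + 1) b = Apast A (tt : ℕ) b ∩ {ω | A tt ω = b tt} := by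
  ext ω
  simp only [Set.mem_inter_iff, Set.mem_setOf_eq, Apast]
  constructor
  · intro h
    exact ⟨fun k hk => h k (by omega), h tt (by omega)⟩
  · rintro ⟨h1, h2⟩ k hk
    by_cases hkt : k = tt
    · subst hkt; exact h2
    · have : (k : ℕ) ≠ (tt : ℕ) := fun he => hkt (Fin.ext he)
      exact h1 k (by omega)

def Sig (P : Measure Ω) (A : Fin K → Ω → Bool) (L : Fin K → Ω → 𝓛)
    (b : Fin K → Bool) (f : Ω → ℝ) (s t : ℕ) : ℝ :=
  ∑ l : Fin K → 𝓛, (Dprod P A L b s t l)⁻¹ *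
    ∫ ω in Lup L t l ∩ Apast A (max t s) b, f ω ∂P

lemma Sig_step (P : Measure Ω) [IsProbabilityMeasure P]
    (A : Fin K → Ω → Bool) (L : Fin K → Ω → 𝓛)
    (hA : ∀ k, Measurable (A k)) (hL : ∀ k, Measurable (L k))
    (hA3 : A3ok P A L) (b : Fin K → Bool) (f : Ω → ℝ)
    (hf : Integrable f P) (hstrip : StripOK P A L f)
    (s t : ℕ) (ht : t < K) :
    Sig P A L b f s t = (Fintype.card 𝓛 : ℝ) * Sig P A L b f s (t + 1) := by
  set tt : Fin K := ⟨t, ht⟩ with htt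
  have htcoe : (tt : ℕ) = t := rfl
  by_cases hts : t < s
  · -- below the weight threshold: only merge
    have hmax1 : max t s = s := by omega
    have hmax2 : max (t + 1) s = s := by omega
    have hD1 : ∀ l, Dprod P A L b s t l = 1 := Dprod_of_le P A L b s t (by omega)
    have hD2 : ∀ l, Dprod P A L b s (t + 1) l = 1 := Dprod_of_le P A L b s (t + 1) (by omega)
    rw [Sig, Sig, hmax1, hmax2]
    simp only [hD1, hD2, inv_one]
    have := merge_step P L hL f hf tt (Apast A s b) (ms_Apast A hA s b)
      (fun _ => (1 : ℝ)) (fun _ _ => rfl)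
    simpa using this
  · -- strip and merge
    have hst : s ≤ t := by omega
    have hmax1 : max t s = t := by omega
    have hmax2 : max (t + 1) s = t + 1 := by omega
    rw [Sig, Sig, hmax1, hmax2]
    have hmerge := merge_step P L hL f hf tt (Apast A t b) (ms_Apast A hA t b)
      (fun l => (Dprod P A L b s t l)⁻¹)
      (fun l x => by
        show (Dprod P A L b s t (Function.update l tt x))⁻¹ = (Dprod P A L b s t l)⁻¹
        rw [htt, Dprod_update P A L b s t ht l x])
    rw [htcoe] at hmerge
    rw [hmerge]
    congr 1
    refine Finset.sum_congr rfl fun l _ => ?_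
    -- per-l strip step
    have hLup : Lup L (t + 1) l = Lpast L t l := (Lpast_eq_Lup L t l).symm
    have hsplitA : Lup L (t + 1) l ∩ Apast A (t + 1) b =
        (Lpast L t l ∩ Apast A t b) ∩ {ω | A tt ω = b tt} := by
      rw [hLup]
      have := Apast_succ A tt b
      rw [htcoe] at this
      rw [this, Set.inter_assoc]
    by_cases hC : P (Lpast L t l ∩ Apast A t b) = 0
    · have hz1 : ∫ ω in Lup L (t + 1) l ∩ Apast A (t + 1) b, f ω ∂P = 0 := by
        rw [Measure.restrict_eq_zero.mpr
          (measure_mono_null (by rw [hsplitA]; exact Set.inter_subset_left) hC),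
          integral_zero_measure]
      have hz2 : ∫ ω in Lup L (t + 1) l ∩ Apast A t b, f ω ∂P = 0 := by
        rw [hLup, Measure.restrict_eq_zero.mpr hC, integral_zero_measure]
      rw [hz1, hz2, mul_zero, mul_zero]
    · have hpos : 0 < P (Lpast L t l ∩ Apast A t b) :=
        lt_of_le_of_ne zero_le (Ne.symm hC)
      have hd : 0 < dW P A L b l tt := by
        have := hA3 tt (b tt) l b (by rw [htcoe]; exact hpos)
        rw [dW, htcoe]
        exact this
      have hd' : dW P A L b l tt ≠ 0 := ne_of_gt hd
      have hstr := hstrip tt (b tt) l b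
      rw [htcoe] at hstr
      have hcd : cP P {ω | A tt ω = b tt} (Lpast L t l ∩ Apast A t b) = dW P A L b l tt := rfl
      rw [Dprod_succ P A L b s t ht hst l, hsplitA, hstr, hLup, mul_inv, hcd]
      field_simp
      rw [mul_comm (Dprod P A L b s t l) (dW P A L b l ⟨t, ht⟩)]
      rw [mul_comm _ (dW P A L b l tt)]
      exact (mul_div_mul_left _ _ hd').symm
lemma Lup_zero (L : Fin K → Ω → 𝓛) (l : Fin K → 𝓛) : Lup L 0 l = Set.univ := by
  ext ω; simp [Lup]

lemma telemaster (P : Measure Ω) [IsProbabilityMeasure P]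
    (A : Fin K → Ω → Bool) (L : Fin K → Ω → 𝓛)
    (hA : ∀ k, Measurable (A k)) (hL : ∀ k, Measurable (L k))
    (hA3 : A3ok P A L) (b : Fin K → Bool) (f : Ω → ℝ)
    (hf : Integrable f P) (hstrip : StripOK P A L f)
    (s : ℕ) (hs : s ≤ K) :
    ∑ l : Fin K → 𝓛, (Dprod P A L b s K l)⁻¹ *
        ∫ ω in Lup L K l ∩ Apast A K b, f ω ∂P =
      ∫ ω in Apast A s b, f ω ∂P := by
  have hcard : ((Fintype.card 𝓛 : ℝ)) ≠ 0 :=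
    Nat.cast_ne_zero.mpr Fintype.card_ne_zero
  have htel : ∀ n, n ≤ K → Sig P A L b f s 0 =
      (Fintype.card 𝓛 : ℝ) ^ n * Sig P A L b f s n := by
    intro n
    induction n with
    | zero => intro _; simp
    | succ n ih =>
        intro h
        rw [ih (by omega), Sig_step P A L hA hL hA3 b f hf hstrip s n (by omega)]
        ring
  have h0 : Sig P A L b f s 0 = (Fintype.card 𝓛 : ℝ) ^ K * ∫ ω in Apast A s b, f ω ∂P := by
    rw [Sig]
    have hmax : max 0 s = s := by omega
    rw [hmax]
    have : ∀ l : Fin K → 𝓛, (Dprod P A L b s 0 l)⁻¹ *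
        ∫ ω in Lup L 0 l ∩ Apast A s b, f ω ∂P =
        ∫ ω in Apast A s b, f ω ∂P := by
      intro l
      rw [Dprod_of_le P A L b s 0 (by omega), Lup_zero, Set.univ_inter, inv_one, one_mul]
    rw [Finset.sum_congr rfl fun l _ => this l, Finset.sum_const, card_univ,
      Fintype.card_fun, Fintype.card_fin, nsmul_eq_mul]
    push_cast
    ring
  have hmaxK : max K s = K := by omega
  have hSigK : Sig P A L b f s K = ∑ l : Fin K → 𝓛, (Dprod P A L b s K l)⁻¹ *
      ∫ ω in Lup L K l ∩ Apast A K b, f ω ∂P := by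
    rw [Sig, hmaxK]
  have hpow : ((Fintype.card 𝓛 : ℝ)) ^ K ≠ 0 := pow_ne_zero _ hcard
  have h1 := htel K le_rfl
  rw [h0] at h1
  have h2 := mul_left_cancel₀ hpow h1
  rw [hSigK] at h2
  exact h2.symm

lemma Apast_eq_Aseg0 (A : Fin K → Ω → Bool) (t : ℕ) (b : Fin K → Bool) :
    Apast A t b = Aseg A 0 t b := by
  ext ω
  constructor <;> intro h k
  · intro _ hk; exact h k hk
  · intro hk; exact h k (by omega) hk

lemma Aseg_succ (A : Fin K → Ω → Bool) (s : ℕ) (tt : Fin K) (hst : s ≤ (tt : ℕ))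
    (b : Fin K → Bool) :
    Aseg A s ((tt : ℕ) + 1) b = Aseg A s (tt : ℕ) b ∩ {ω | A tt ω = b tt} := by
  ext ω
  simp only [Set.mem_inter_iff, Set.mem_setOf_eq, Aseg]
  constructor
  · intro h
    exact ⟨fun k h1 h2 => h k h1 (by omega), h tt hst (by omega)⟩
  · rintro ⟨h1, h2⟩ k hk1 hk2
    by_cases hkt : k = tt
    · subst hkt; exact h2
    · have : (k : ℕ) ≠ (tt : ℕ) := fun he => hkt (Fin.ext he)
      exact h1 k hk1 (by omega)

lemma Nprod_eq (P : Measure Ω) [IsProbabilityMeasure P] (A : Fin K → Ω → Bool)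
    (b : Fin K → Bool) (s : ℕ) :
    ∏ k ∈ Finset.univ.filter (fun k : Fin K => s ≤ (k : ℕ)),
        cP P {ω' | A k ω' = b k} (Aseg A s (k : ℕ) b) =
      (P (Aseg A s K b)).toReal := by
  have claim : ∀ t, t ≤ K →
      ∏ k ∈ Finset.univ.filter (fun k : Fin K => s ≤ (k : ℕ) ∧ (k : ℕ) < t),
          cP P {ω' | A k ω' = b k} (Aseg A s (k : ℕ) b) =
        (P (Aseg A s t b)).toReal := by
    intro t
    induction t with
    | zero =>
        intro _
        have h1 : Finset.univ.filter (fun k : Fin K => s ≤ (k : ℕ) ∧ (k : ℕ) < 0) = ∅ := by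
          ext k; simp
        have h2 : Aseg A s 0 b = Set.univ := by
          ext ω; simp only [Aseg, Set.mem_setOf_eq, Set.mem_univ, iff_true]
          intro k _ hk; omega
        rw [h1, Finset.prod_empty, h2]
        simp
    | succ t ih =>
        intro h
        have ht : t < K := by omega
        set tt : Fin K := ⟨t, ht⟩ with htt
        by_cases hts : t < s
        · have h1 : Finset.univ.filter (fun k : Fin K => s ≤ (k : ℕ) ∧ (k : ℕ) < t + 1) = ∅ := by
            ext k; simp only [Finset.mem_filter, Finset.mem_univ, true_and,
              Finset.notMem_empty, iff_false]; omega
          have h2 : Aseg A s (t + 1) b = Set.univ := by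
            ext ω; simp only [Aseg, Set.mem_setOf_eq, Set.mem_univ, iff_true]
            intro k hk1 hk2; omega
          rw [h1, Finset.prod_empty, h2]
          simp
        · have hst : s ≤ t := by omega
          have hins : Finset.univ.filter (fun k : Fin K => s ≤ (k : ℕ) ∧ (k : ℕ) < t + 1) =
              insert tt (Finset.univ.filter (fun k : Fin K => s ≤ (k : ℕ) ∧ (k : ℕ) < t)) := by
            ext k
            simp only [Finset.mem_filter, Finset.mem_univ, true_and, Finset.mem_insert,
              Fin.ext_iff, htt]
            omega
          rw [hins, Finset.prod_insert (by simp [htt]), ih (by omega)]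
          have hsucc := Aseg_succ A s tt hst b
          have htcoe : (tt : ℕ) = t := rfl
          rw [htcoe] at hsucc
          by_cases h0 : P (Aseg A s t b) = 0
          · have hz : P (Aseg A s (t + 1) b) = 0 := by
              rw [hsucc]; exact measure_mono_null Set.inter_subset_left h0
            rw [hz, cP, h0]
            simp
          · have hne : (P (Aseg A s t b)).toReal ≠ 0 :=
              ENNReal.toReal_ne_zero.mpr ⟨h0, measure_ne_top _ _⟩
            rw [cP, htcoe, hsucc, Set.inter_comm]
            field_simp
  have hfe : Finset.univ.filter (fun k : Fin K => s ≤ (k : ℕ)) =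
      Finset.univ.filter (fun k : Fin K => s ≤ (k : ℕ) ∧ (k : ℕ) < K) := by
    ext k; simp only [Finset.mem_filter, Finset.mem_univ, true_and]
    exact ⟨fun h => ⟨h, k.isLt⟩, fun h => h.1⟩
  rw [hfe, claim K le_rfl]
/-- The finset of full treatment histories whose last `m` entries equal `a`. -/
def Ba (K m : ℕ) (a : Bool) : Finset (Fin K → Bool) :=
  Finset.univ.filter (fun b => ∀ k : Fin K, K - m ≤ (k : ℕ) → b k = a)

lemma mem_Ba {m : ℕ} {a : Bool} {b : Fin K → Bool} :
    b ∈ Ba K m a ↔ ∀ k : Fin K, K - m ≤ (k : ℕ) → b k = a := by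
  simp [Ba]

lemma decomp (P : Measure Ω) [IsProbabilityMeasure P]
    (A : Fin K → Ω → Bool) (L : Fin K → Ω → 𝓛)
    (hA : ∀ k, Measurable (A k)) (hL : ∀ k, Measurable (L k))
    (m : ℕ) (a : Bool) (W : Ω → ℝ) (w : (Fin K → 𝓛) → (Fin K → Bool) → ℝ)
    (hW : ∀ l b ω, ω ∈ Lup L K l ∩ Apast A K b → W ω = w l b)
    (Y' : Ω → ℝ) (Ypot' : (Fin K → Bool) → Ω → ℝ)
    (hcons : ∀ bb ω, (∀ k, A k ω = bb k) → Y' ω = Ypot' bb ω)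
    (hYi : ∀ bb, Integrable (Ypot' bb) P) :
    ∫ ω in Etr A m a, W ω * Y' ω ∂P =
      ∑ bb ∈ Ba K m a, ∑ l : Fin K → 𝓛,
        w l bb * ∫ ω in Lup L K l ∩ Apast A K bb, Ypot' bb ω ∂P := by
  have hmsAtom : ∀ (l : Fin K → 𝓛) (bb : Fin K → Bool),
      MeasurableSet (Lup L K l ∩ Apast A K bb) :=
    fun l bb => (ms_Lup L hL K l).inter (ms_Apast A hA K bb)
  set g : Ω → ℝ := fun ω => ∑ bb ∈ Ba K m a, ∑ l : Fin K → 𝓛,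
    Set.indicator (Lup L K l ∩ Apast A K bb) (fun ω' => w l bb * Ypot' bb ω') ω with hg
  have hmem : ∀ (l : Fin K → 𝓛) (bb : Fin K → Bool) (ω : Ω),
      ω ∈ Lup L K l ∩ Apast A K bb ↔ (l = fun k => L k ω) ∧ (bb = fun k => A k ω) := by
    intro l bb ω
    constructor
    · rintro ⟨h1, h2⟩
      exact ⟨funext fun k => (h1 k k.isLt).symm, funext fun k => (h2 k k.isLt).symm⟩
    · rintro ⟨h1, h2⟩
      subst h1; subst h2
      exact ⟨fun k _ => rfl, fun k _ => rfl⟩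
  have hpt : ∀ ω, (Etr A m a).indicator (fun ω => W ω * Y' ω) ω = g ω := by
    intro ω
    by_cases hE : ω ∈ Etr A m a
    · rw [Set.indicator_of_mem hE, hg]
      show W ω * Y' ω = ∑ bb ∈ Ba K m a, ∑ l : Fin K → 𝓛,
        Set.indicator (Lup L K l ∩ Apast A K bb) (fun ω' => w l bb * Ypot' bb ω') ω
      have hb0 : (fun k => A k ω) ∈ Ba K m a :=
        mem_Ba.mpr fun k hk => hE k hk
      rw [Finset.sum_eq_single (fun k => A k ω)]
      · rw [Finset.sum_eq_single (fun k => L k ω)]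
        · rw [Set.indicator_of_mem ((hmem _ _ ω).mpr ⟨rfl, rfl⟩)]
          rw [hW _ _ ω ((hmem _ _ ω).mpr ⟨rfl, rfl⟩), hcons _ ω (fun k => rfl)]
        · intro l _ hl
          rw [Set.indicator_of_notMem]
          intro hc
          exact hl ((hmem _ _ ω).mp hc).1
        · intro hout; exact absurd (Finset.mem_univ _) hout
      · intro bb _ hbb
        refine Finset.sum_eq_zero fun l _ => ?_
        rw [Set.indicator_of_notMem]
        intro hc
        exact hbb ((hmem _ _ ω).mp hc).2
      · intro hout; exact absurd hb0 hout
    · rw [Set.indicator_of_notMem hE, hg]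
      show (0 : ℝ) = ∑ bb ∈ Ba K m a, ∑ l : Fin K → 𝓛,
        Set.indicator (Lup L K l ∩ Apast A K bb) (fun ω' => w l bb * Ypot' bb ω') ω
      refine (Finset.sum_eq_zero fun bb hbb => Finset.sum_eq_zero fun l _ => ?_).symm
      rw [Set.indicator_of_notMem]
      intro hc
      have h2 := ((hmem _ _ ω).mp hc).2
      apply hE
      intro k hk
      rw [show A k ω = bb k from by rw [h2]]
      exact mem_Ba.mp hbb k hk
  have hintg : ∀ bb ∈ Ba K m a, ∀ l : Fin K → 𝓛,
      Integrable (Set.indicator (Lup L K l ∩ Apast A K bb)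
        (fun ω' => w l bb * Ypot' bb ω')) P :=
    fun bb _ l => (((hYi bb).const_mul (w l bb)).indicator (hmsAtom l bb))
  calc ∫ ω in Etr A m a, W ω * Y' ω ∂P
      = ∫ ω, (Etr A m a).indicator (fun ω => W ω * Y' ω) ω ∂P :=
        (integral_indicator (ms_Etr A hA m a)).symm
    _ = ∫ ω, g ω ∂P := by
        refine integral_congr_ae (Filter.Eventually.of_forall hpt)
    _ = ∑ bb ∈ Ba K m a, ∑ l : Fin K → 𝓛,
          ∫ ω, Set.indicator (Lup L K l ∩ Apast A K bb)
            (fun ω' => w l bb * Ypot' bb ω') ω ∂P := by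
        rw [hg]
        rw [integral_finset_sum _ (fun bb hbb => integrable_finset_sum _
          (fun l _ => hintg bb hbb l))]
        exact Finset.sum_congr rfl fun bb hbb =>
          integral_finset_sum _ (fun l _ => hintg bb hbb l)
    _ = ∑ bb ∈ Ba K m a, ∑ l : Fin K → 𝓛,
          w l bb * ∫ ω in Lup L K l ∩ Apast A K bb, Ypot' bb ω ∂P := by
        refine Finset.sum_congr rfl fun bb _ => Finset.sum_congr rfl fun l _ => ?_
        rw [integral_indicator (hmsAtom l bb), integral_const_mul]
lemma Apast_zero (A : Fin K → Ω → Bool) (b : Fin K → Bool) : Apast A 0 b = Set.univ := by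
  ext ω; simp [Apast]

lemma key_sw (P : Measure Ω) [IsProbabilityMeasure P]
    (A : Fin K → Ω → Bool) (L : Fin K → Ω → 𝓛)
    (hA : ∀ k, Measurable (A k)) (hL : ∀ k, Measurable (L k)) (hA3 : A3ok P A L)
    (m : ℕ) (a : Bool)
    (Y' : Ω → ℝ) (Ypot' : (Fin K → Bool) → Ω → ℝ)
    (hcons : ∀ bb ω, (∀ k, A k ω = bb k) → Y' ω = Ypot' bb ω)
    (hYi : ∀ bb, Integrable (Ypot' bb) P)
    (hstrip : ∀ bb, StripOK P A L (Ypot' bb)) :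
    ∫ ω in Etr A m a, Wsw P A L ω * Y' ω ∂P =
      ∑ bb ∈ Ba K m a, (P (Aseg A 0 K bb)).toReal * ∫ ω, Ypot' bb ω ∂P := by
  have hW : ∀ (l : Fin K → 𝓛) (b : Fin K → Bool) (ω : Ω),
      ω ∈ Lup L K l ∩ Apast A K b →
      Wsw P A L ω = ∏ k : Fin K,
        cP P {ω' | A k ω' = b k} (Apast A (k : ℕ) b) / dW P A L b l k := by
    intro l b ω hω
    have hfa : (fun j => A j ω) = b := funext fun k => hω.2 k k.isLt
    have hfl : (fun j => L j ω) = l := funext fun k => hω.1 k k.isLt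
    show (∏ k : Fin K, cP P {ω' | A k ω' = A k ω} (Apast A (k : ℕ) (fun j => A j ω)) /
        cP P {ω' | A k ω' = A k ω}
          (Lpast L (k : ℕ) (fun j => L j ω) ∩ Apast A (k : ℕ) (fun j => A j ω))) = _
    refine Finset.prod_congr rfl fun k _ => ?_
    rw [hω.2 k k.isLt, hfa, hfl, dW]
  rw [decomp P A L hA hL m a (Wsw P A L) _ hW Y' Ypot' hcons hYi]
  refine Finset.sum_congr rfl fun bb _ => ?_
  have hfact : ∀ l : Fin K → 𝓛,
      (∏ k : Fin K, cP P {ω' | A k ω' = bb k} (Apast A (k : ℕ) bb) / dW P A L bb l k) =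
      (∏ k : Fin K, cP P {ω' | A k ω' = bb k} (Apast A (k : ℕ) bb)) *
        (Dprod P A L bb 0 K l)⁻¹ := by
    intro l
    rw [Finset.prod_div_distrib, div_eq_mul_inv, Dprod]
    congr 2
    refine (Finset.prod_congr ?_ fun _ _ => rfl).symm
    ext k
    simp only [Finset.mem_filter, Finset.mem_univ, true_and, iff_true]
    exact ⟨Nat.zero_le _, k.isLt⟩
  have hN : (∏ k : Fin K, cP P {ω' | A k ω' = bb k} (Apast A (k : ℕ) bb)) =
      (P (Aseg A 0 K bb)).toReal := by
    rw [← Nprod_eq P A bb 0]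
    refine Finset.prod_congr ?_ fun k _ => by rw [Apast_eq_Aseg0]
    ext k
    simp
  calc ∑ l : Fin K → 𝓛,
        (∏ k : Fin K, cP P {ω' | A k ω' = bb k} (Apast A (k : ℕ) bb) / dW P A L bb l k) *
          ∫ ω in Lup L K l ∩ Apast A K bb, Ypot' bb ω ∂P
      = (P (Aseg A 0 K bb)).toReal * ∑ l : Fin K → 𝓛, (Dprod P A L bb 0 K l)⁻¹ *
          ∫ ω in Lup L K l ∩ Apast A K bb, Ypot' bb ω ∂P := by
        rw [Finset.mul_sum]
        refine Finset.sum_congr rfl fun l _ => ?_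
        rw [hfact l, hN]
        ring
    _ = (P (Aseg A 0 K bb)).toReal * ∫ ω, Ypot' bb ω ∂P := by
        rw [telemaster P A L hA hL hA3 bb (Ypot' bb) (hYi bb) (hstrip bb) 0 (Nat.zero_le _),
          Apast_zero, Measure.restrict_univ]

lemma key_rsw (P : Measure Ω) [IsProbabilityMeasure P]
    (A : Fin K → Ω → Bool) (L : Fin K → Ω → 𝓛)
    (hA : ∀ k, Measurable (A k)) (hL : ∀ k, Measurable (L k)) (hA3 : A3ok P A L)
    (m : ℕ) (hmK : m ≤ K) (a : Bool)
    (Y' : Ω → ℝ) (Ypot' : (Fin K → Bool) → Ω → ℝ)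
    (hcons : ∀ bb ω, (∀ k, A k ω = bb k) → Y' ω = Ypot' bb ω)
    (hYi : ∀ bb, Integrable (Ypot' bb) P)
    (hstrip : ∀ bb, StripOK P A L (Ypot' bb)) :
    ∫ ω in Etr A m a, Wrsw P A L m ω * Y' ω ∂P =
      ∑ bb ∈ Ba K m a, (P (Aseg A (K - m) K bb)).toReal *
        ∫ ω in Apast A (K - m) bb, Ypot' bb ω ∂P := by
  have hW : ∀ (l : Fin K → 𝓛) (b : Fin K → Bool) (ω : Ω),
      ω ∈ Lup L K l ∩ Apast A K b →
      Wrsw P A L m ω = ∏ k ∈ Finset.univ.filter (fun k : Fin K => K - m ≤ (k : ℕ)),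
        cP P {ω' | A k ω' = b k} (Aseg A (K - m) (k : ℕ) b) / dW P A L b l k := by
    intro l b ω hω
    have hfa : (fun j => A j ω) = b := funext fun k => hω.2 k k.isLt
    have hfl : (fun j => L j ω) = l := funext fun k => hω.1 k k.isLt
    show (∏ k ∈ Finset.univ.filter (fun k : Fin K => K - m ≤ (k : ℕ)),
        cP P {ω' | A k ω' = A k ω} (Aseg A (K - m) (k : ℕ) (fun j => A j ω)) /
          cP P {ω' | A k ω' = A k ω}
            (Lpast L (k : ℕ) (fun j => L j ω) ∩ Apast A (k : ℕ) (fun j => A j ω))) = _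
    refine Finset.prod_congr rfl fun k _ => ?_
    rw [hω.2 k k.isLt, hfa, hfl, dW]
  rw [decomp P A L hA hL m a (Wrsw P A L m) _ hW Y' Ypot' hcons hYi]
  refine Finset.sum_congr rfl fun bb _ => ?_
  have hfact : ∀ l : Fin K → 𝓛,
      (∏ k ∈ Finset.univ.filter (fun k : Fin K => K - m ≤ (k : ℕ)),
        cP P {ω' | A k ω' = bb k} (Aseg A (K - m) (k : ℕ) bb) / dW P A L bb l k) =
      (∏ k ∈ Finset.univ.filter (fun k : Fin K => K - m ≤ (k : ℕ)),
        cP P {ω' | A k ω' = bb k} (Aseg A (K - m) (k : ℕ) bb)) *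
        (Dprod P A L bb (K - m) K l)⁻¹ := by
    intro l
    rw [Finset.prod_div_distrib, div_eq_mul_inv, Dprod]
    congr 2
    refine (Finset.prod_congr ?_ fun _ _ => rfl).symm
    ext k
    simp only [Finset.mem_filter, Finset.mem_univ, true_and]
    exact ⟨fun h => h.1, fun h => ⟨h, k.isLt⟩⟩
  have hN : (∏ k ∈ Finset.univ.filter (fun k : Fin K => K - m ≤ (k : ℕ)),
      cP P {ω' | A k ω' = bb k} (Aseg A (K - m) (k : ℕ) bb)) =
      (P (Aseg A (K - m) K bb)).toReal := Nprod_eq P A bb (K - m)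
  calc ∑ l : Fin K → 𝓛,
        (∏ k ∈ Finset.univ.filter (fun k : Fin K => K - m ≤ (k : ℕ)),
          cP P {ω' | A k ω' = bb k} (Aseg A (K - m) (k : ℕ) bb) / dW P A L bb l k) *
          ∫ ω in Lup L K l ∩ Apast A K bb, Ypot' bb ω ∂P
      = (P (Aseg A (K - m) K bb)).toReal * ∑ l : Fin K → 𝓛, (Dprod P A L bb (K - m) K l)⁻¹ *
          ∫ ω in Lup L K l ∩ Apast A K bb, Ypot' bb ω ∂P := by
        rw [Finset.mul_sum]
        refine Finset.sum_congr rfl fun l _ => ?_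
        rw [hfact l, hN]
        ring
    _ = (P (Aseg A (K - m) K bb)).toReal * ∫ ω in Apast A (K - m) bb, Ypot' bb ω ∂P := by
        rw [telemaster P A L hA hL hA3 bb (Ypot' bb) (hYi bb) (hstrip bb) (K - m) (by omega)]
lemma toReal_sum_measure {ι : Type*} (P : Measure Ω) [IsProbabilityMeasure P]
    (S : Finset ι) (t : ι → Set Ω) (hm : ∀ b ∈ S, MeasurableSet (t b))
    (hd : (S : Set ι).PairwiseDisjoint t) :
    ∑ b ∈ S, (P (t b)).toReal = (P (⋃ b ∈ S, t b)).toReal := by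
  rw [measure_biUnion_finset hd hm, ENNReal.toReal_sum (fun b _ => measure_ne_top P _)]

lemma Aseg0_disjoint (A : Fin K → Ω → Bool) (S : Finset (Fin K → Bool)) :
    (S : Set (Fin K → Bool)).PairwiseDisjoint (fun bb => Aseg A 0 K bb) := by
  intro b hb b' hb' hne
  refine Set.disjoint_left.mpr fun ω hω hω' => hne (funext fun k => ?_)
  rw [← hω k (Nat.zero_le _) k.isLt, ← hω' k (Nat.zero_le _) k.isLt]

lemma union_Aseg0_Ba (A : Fin K → Ω → Bool) (m : ℕ) (a : Bool) :
    ⋃ bb ∈ Ba K m a, Aseg A 0 K bb = Etr A m a := by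
  ext ω
  simp only [Set.mem_iUnion, exists_prop]
  constructor
  · rintro ⟨bb, hbb, hω⟩ k hk
    rw [hω k (Nat.zero_le _) k.isLt]
    exact mem_Ba.mp hbb k hk
  · intro hω
    exact ⟨fun k => A k ω, mem_Ba.mpr fun k hk => hω k hk, fun k _ _ => rfl⟩

lemma union_Aseg0_Ba_filter (A : Fin K → Ω → Bool) (m : ℕ) (a : Bool) (j : Fin K) :
    ⋃ bb ∈ (Ba K m a).filter (fun bb => bb (rev j) = true), Aseg A 0 K bb =
      {ω | A (rev j) ω = true} ∩ Etr A m a := by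
  ext ω
  simp only [Set.mem_iUnion, exists_prop, Finset.mem_filter, Set.mem_inter_iff,
    Set.mem_setOf_eq]
  constructor
  · rintro ⟨bb, ⟨hbb, hrj⟩, hω⟩
    refine ⟨by rw [hω (rev j) (Nat.zero_le _) (rev j).isLt]; exact hrj, fun k hk => ?_⟩
    rw [hω k (Nat.zero_le _) k.isLt]
    exact mem_Ba.mp hbb k hk
  · rintro ⟨h1, h2⟩
    exact ⟨fun k => A k ω, ⟨mem_Ba.mpr fun k hk => h2 k hk, h1⟩, fun k _ _ => rfl⟩

lemma Apast_pre_disjoint (A : Fin K → Ω → Bool) (m : ℕ) (a : Bool) :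
    ((Ba K m a : Finset (Fin K → Bool)) : Set (Fin K → Bool)).PairwiseDisjoint
      (fun bb => Apast A (K - m) bb) := by
  intro b hb b' hb' hne
  refine Set.disjoint_left.mpr fun ω hω hω' => hne (funext fun k => ?_)
  by_cases hk : K - m ≤ (k : ℕ)
  · have h1 : b k = a := mem_Ba.mp (by exact_mod_cast hb) k hk
    have h2 : b' k = a := mem_Ba.mp (by exact_mod_cast hb') k hk
    rw [h1, h2]
  · rw [← hω k (by omega), ← hω' k (by omega)]

lemma union_Apast_pre (A : Fin K → Ω → Bool) (m : ℕ) (a : Bool) :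
    ⋃ bb ∈ Ba K m a, Apast A (K - m) bb = Set.univ := by
  ext ω
  simp only [Set.mem_iUnion, exists_prop, Set.mem_univ, iff_true]
  refine ⟨fun k => if K - m ≤ (k : ℕ) then a else A k ω,
    mem_Ba.mpr fun k hk => by simp [hk], fun k hk => ?_⟩
  have : ¬ K - m ≤ (k : ℕ) := by omega
  simp [this]
lemma den_sw (P : Measure Ω) [IsProbabilityMeasure P]
    (A : Fin K → Ω → Bool) (L : Fin K → Ω → 𝓛)
    (hA : ∀ k, Measurable (A k)) (hL : ∀ k, Measurable (L k)) (hA3 : A3ok P A L)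
    (m : ℕ) (a : Bool) :
    ∫ ω in Etr A m a, Wsw P A L ω ∂P = (P (Etr A m a)).toReal := by
  have h1 : ∫ ω in Etr A m a, Wsw P A L ω ∂P =
      ∫ ω in Etr A m a, Wsw P A L ω * (fun _ => (1 : ℝ)) ω ∂P := by
    simp
  rw [h1, key_sw P A L hA hL hA3 m a (fun _ => 1) (fun _ _ => 1) (fun _ _ _ => rfl)
    (fun _ => integrable_const 1) (fun _ => stripOK_const P A L)]
  have h2 : ∀ bb : Fin K → Bool, (∫ ω, (1 : ℝ) ∂P) = 1 := by
    intro bb; simp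
  calc ∑ bb ∈ Ba K m a, (P (Aseg A 0 K bb)).toReal * ∫ ω, (1 : ℝ) ∂P
      = ∑ bb ∈ Ba K m a, (P (Aseg A 0 K bb)).toReal := by
        refine Finset.sum_congr rfl fun bb _ => ?_
        rw [h2 bb, mul_one]
    _ = (P (⋃ bb ∈ Ba K m a, Aseg A 0 K bb)).toReal :=
        toReal_sum_measure P _ _ (fun bb _ => ms_Aseg A hA 0 K bb) (Aseg0_disjoint A _)
    _ = (P (Etr A m a)).toReal := by rw [union_Aseg0_Ba A m a]

lemma num_sw (P : Measure Ω) [IsProbabilityMeasure P]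
    (A : Fin K → Ω → Bool) (L : Fin K → Ω → 𝓛)
    (hA : ∀ k, Measurable (A k)) (hL : ∀ k, Measurable (L k))
    (hA3 : A3ok P A L)
    (m : ℕ) (a : Bool) (Y : Ω → ℝ) (Ypot' : (Fin K → Bool) → Ω → ℝ)
    (hYpm : ∀ b, Measurable (Ypot' b)) (hYpi : ∀ b, Integrable (Ypot' b) P)
    (hA1 : A1ok A Y Ypot') (hA2 : A2ok P A L Ypot')
    (ψ0 : ℝ) (ψ : Fin K → ℝ) (hMSM : MSMeq P Ypot' ψ0 ψ) :
    ∫ ω in Etr A m a, Wsw P A L ω * Y ω ∂P =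
      ψ0 * (P (Etr A m a)).toReal +
        ∑ j : Fin K, ψ j * (P ({ω | A (rev j) ω = true} ∩ Etr A m a)).toReal := by
  rw [key_sw P A L hA hL hA3 m a Y Ypot' (fun bb ω h => hA1 bb ω h) hYpi
    (fun bb => stripOK_pot P A L Ypot' hYpm hA2 bb)]
  have hsum : ∀ j : Fin K,
      (∑ bb ∈ Ba K m a, (P (Aseg A 0 K bb)).toReal *
        (if bb (rev j) = true then (1 : ℝ) else 0)) =
      (P ({ω | A (rev j) ω = true} ∩ Etr A m a)).toReal := by
    intro j
    rw [← union_Aseg0_Ba_filter A m a j,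
      ← toReal_sum_measure P _ _ (fun bb _ => ms_Aseg A hA 0 K bb)
        (Aseg0_disjoint A _)]
    rw [Finset.sum_filter]
    refine Finset.sum_congr rfl fun bb _ => ?_
    by_cases h : bb (rev j) = true <;> simp [h]
  calc ∑ bb ∈ Ba K m a, (P (Aseg A 0 K bb)).toReal * ∫ ω, Ypot' bb ω ∂P
      = ∑ bb ∈ Ba K m a, ((P (Aseg A 0 K bb)).toReal * ψ0 +
          ∑ j : Fin K, ψ j * ((P (Aseg A 0 K bb)).toReal *
            (if bb (rev j) = true then (1 : ℝ) else 0))) := by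
        refine Finset.sum_congr rfl fun bb _ => ?_
        rw [hMSM bb, mul_add, Finset.mul_sum]
        congr 1
        refine Finset.sum_congr rfl fun j _ => by ring
    _ = (∑ bb ∈ Ba K m a, (P (Aseg A 0 K bb)).toReal) * ψ0 +
        ∑ j : Fin K, ψ j * (∑ bb ∈ Ba K m a, (P (Aseg A 0 K bb)).toReal *
          (if bb (rev j) = true then (1 : ℝ) else 0)) := by
        rw [Finset.sum_add_distrib, Finset.sum_mul]
        congr 1
        rw [Finset.sum_comm]
        refine Finset.sum_congr rfl fun j _ => by rw [Finset.mul_sum]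
    _ = ψ0 * (P (Etr A m a)).toReal +
        ∑ j : Fin K, ψ j * (P ({ω | A (rev j) ω = true} ∩ Etr A m a)).toReal := by
        rw [toReal_sum_measure P _ _ (fun bb _ => ms_Aseg A hA 0 K bb) (Aseg0_disjoint A _),
          union_Aseg0_Ba A m a, mul_comm]
        congr 1
        exact Finset.sum_congr rfl fun j _ => by rw [hsum j]

lemma theta_sw (P : Measure Ω) [IsProbabilityMeasure P]
    (A : Fin K → Ω → Bool) (L : Fin K → Ω → 𝓛)
    (hA : ∀ k, Measurable (A k)) (hL : ∀ k, Measurable (L k))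
    (m : ℕ) (Y : Ω → ℝ) (Ypot' : (Fin K → Bool) → Ω → ℝ)
    (hYpm : ∀ b, Measurable (Ypot' b)) (hYpi : ∀ b, Integrable (Ypot' b) P)
    (hpos1 : 0 < P (Etr A m true)) (hpos0 : 0 < P (Etr A m false))
    (hA1 : A1ok A Y Ypot') (hA2 : A2ok P A L Ypot') (hA3 : A3ok P A L)
    (ψ0 : ℝ) (ψ : Fin K → ℝ) (hMSM : MSMeq P Ypot' ψ0 ψ) :
    θW P A m (Wsw P A L) Y = ∑ j : Fin K, ψ j *
      (cP P {ω | A (rev j) ω = true} (Etr A m true) -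
        cP P {ω | A (rev j) ω = true} (Etr A m false)) := by
  have hmu : ∀ a : Bool, 0 < P (Etr A m a) →
      (∫ ω in Etr A m a, Wsw P A L ω * Y ω ∂P) / (∫ ω in Etr A m a, Wsw P A L ω ∂P) =
      ψ0 + ∑ j : Fin K, ψ j * cP P {ω | A (rev j) ω = true} (Etr A m a) := by
    intro a hpos
    have hX : (P (Etr A m a)).toReal ≠ 0 :=
      ENNReal.toReal_ne_zero.mpr ⟨ne_of_gt hpos, measure_ne_top _ _⟩
    rw [den_sw P A L hA hL hA3 m a,
      num_sw P A L hA hL hA3 m a Y Ypot' hYpm hYpi hA1 hA2 ψ0 ψ hMSM]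
    rw [add_div, Finset.sum_div, mul_div_assoc ψ0, div_self hX, mul_one]
    congr 1
    refine Finset.sum_congr rfl fun j _ => ?_
    rw [mul_div_assoc, cP]
  rw [θW, hmu true hpos1, hmu false hpos0]
  simp only [mul_sub]
  rw [Finset.sum_sub_distrib]
  ring
lemma rev_injective {K : ℕ} : Function.Injective (rev (K := K)) := by
  intro i j h
  have hi := i.isLt
  have hj := j.isLt
  have hv := congrArg Fin.val h
  simp only [rev] at hv
  exact Fin.ext (by omega)

lemma theta_rsw (P : Measure Ω) [IsProbabilityMeasure P]
    (A : Fin K → Ω → Bool) (L : Fin K → Ω → 𝓛)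
    (hA : ∀ k, Measurable (A k)) (hL : ∀ k, Measurable (L k))
    (m : ℕ) (hm1 : 1 ≤ m) (hmK : m ≤ K)
    (Y : Ω → ℝ) (Ypot' : (Fin K → Bool) → Ω → ℝ)
    (hYpm : ∀ b, Measurable (Ypot' b)) (hYpi : ∀ b, Integrable (Ypot' b) P)
    (hpos1 : 0 < P (Etr A m true)) (hpos0 : 0 < P (Etr A m false))
    (hA1 : A1ok A Y Ypot') (hA2 : A2ok P A L Ypot') (hA3 : A3ok P A L)
    (ψ0 : ℝ) (ψ : Fin K → ℝ) (hMSM : MSMeq P Ypot' ψ0 ψ)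
    (hA5 : A5ok P A Ypot' m) :
    θW P A m (Wrsw P A L m) Y =
      ∑ j ∈ Finset.univ.filter (fun j : Fin K => (j : ℕ) < m), ψ j := by
  have hEtrEq : ∀ (a : Bool), ∀ bb ∈ Ba K m a, Aseg A (K - m) K bb = Etr A m a := by
    intro a bb hbb
    ext ω
    constructor
    · intro h k hk
      rw [← mem_Ba.mp hbb k hk]
      exact h k hk k.isLt
    · intro h k hk _
      rw [mem_Ba.mp hbb k hk]
      exact h k hk
  -- ratio identity
  have hmu : ∀ a : Bool, 0 < P (Etr A m a) →
      (∫ ω in Etr A m a, Wrsw P A L m ω * Y ω ∂P) /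
          (∫ ω in Etr A m a, Wrsw P A L m ω ∂P) =
      ∑ bb ∈ Ba K m a, ∫ ω in Apast A (K - m) bb, Ypot' bb ω ∂P := by
    intro a hpos
    have hX : (P (Etr A m a)).toReal ≠ 0 :=
      ENNReal.toReal_ne_zero.mpr ⟨ne_of_gt hpos, measure_ne_top _ _⟩
    have hnum : ∫ ω in Etr A m a, Wrsw P A L m ω * Y ω ∂P =
        (P (Etr A m a)).toReal *
          ∑ bb ∈ Ba K m a, ∫ ω in Apast A (K - m) bb, Ypot' bb ω ∂P := by
      rw [key_rsw P A L hA hL hA3 m hmK a Y Ypot' (fun bb ω h => hA1 bb ω h) hYpi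
        (fun bb => stripOK_pot P A L Ypot' hYpm hA2 bb), Finset.mul_sum]
      exact Finset.sum_congr rfl fun bb hbb => by rw [hEtrEq a bb hbb]
    have hden : ∫ ω in Etr A m a, Wrsw P A L m ω ∂P = (P (Etr A m a)).toReal := by
      have h1 : ∫ ω in Etr A m a, Wrsw P A L m ω ∂P =
          ∫ ω in Etr A m a, Wrsw P A L m ω * (fun _ => (1 : ℝ)) ω ∂P := by simp
      rw [h1, key_rsw P A L hA hL hA3 m hmK a (fun _ => 1) (fun _ _ => 1) (fun _ _ _ => rfl)
        (fun _ => integrable_const 1) (fun _ => stripOK_const P A L)]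
      have h2 : ∀ bb ∈ Ba K m a, (P (Aseg A (K - m) K bb)).toReal *
          (∫ ω in Apast A (K - m) bb, (1 : ℝ) ∂P) =
          (P (Etr A m a)).toReal * (P (Apast A (K - m) bb)).toReal := by
        intro bb hbb
        rw [hEtrEq a bb hbb]
        simp [measureReal_def]
      rw [Finset.sum_congr rfl h2, ← Finset.mul_sum,
        toReal_sum_measure P _ _ (fun bb _ => ms_Apast A hA _ bb) (Apast_pre_disjoint A m a),
        union_Apast_pre A m a]
      simp
    rw [hnum, hden, mul_comm, mul_div_assoc, div_self hX, mul_one]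
  -- conditional MSM coefficients
  have hchoice : ∀ bb : Fin K → Bool, ∃ (φ0 : ℝ) (φ : Fin K → ℝ), ∀ a' : Fin K → Bool,
      ∫ ω in Apast A (K - m) bb, Ypot' a' ω ∂P =
        (P (Apast A (K - m) bb)).toReal *
          (φ0 + ∑ j : Fin K, φ j * (if a' (rev j) = true then 1 else 0)) := by
    intro bb
    by_cases h : 0 < P (Apast A (K - m) bb)
    · obtain ⟨φ0, φ, hφ⟩ := hA5 bb h
      have hX : (P (Apast A (K - m) bb)).toReal ≠ 0 :=
        ENNReal.toReal_ne_zero.mpr ⟨ne_of_gt h, measure_ne_top _ _⟩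
      exact ⟨φ0, φ, fun a' => by rw [← hφ a', mul_div_cancel₀ _ hX]⟩
    · have h0 : P (Apast A (K - m) bb) = 0 := by
        by_contra hc
        exact h (lt_of_le_of_ne zero_le (Ne.symm hc))
      refine ⟨0, 0, fun a' => ?_⟩
      rw [Measure.restrict_eq_zero.mpr h0, integral_zero_measure, h0]
      simp
  choose φ0 φ hφ using hchoice
  set Pre : (Fin K → Bool) → Set Ω := fun bb => Apast A (K - m) bb with hPre
  set X : (Fin K → Bool) → ℝ := fun bb => (P (Pre bb)).toReal with hXdef
  set c0 : ℝ := ∑ bb ∈ Ba K m false, X bb * φ0 bb with hc0def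
  set c : Fin K → ℝ := fun j => ∑ bb ∈ Ba K m false, X bb * φ bb j with hcdef
  have hrepr : ∀ a' : Fin K → Bool,
      ψ0 + ∑ j : Fin K, ψ j * (if a' (rev j) = true then 1 else 0) =
      c0 + ∑ j : Fin K, c j * (if a' (rev j) = true then 1 else 0) := by
    intro a'
    rw [← hMSM a']
    have h1 : ∫ ω, Ypot' a' ω ∂P =
        ∑ bb ∈ Ba K m false, ∫ ω in Pre bb, Ypot' a' ω ∂P := by
      have h2 : ∫ ω, Ypot' a' ω ∂P =
          ∫ ω in ⋃ bb ∈ Ba K m false, Pre bb, Ypot' a' ω ∂P := by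
        rw [hPre]
        rw [union_Apast_pre A m false, Measure.restrict_univ]
      rw [h2, integral_biUnion_finset _ (fun bb _ => ms_Apast A hA _ bb)
        (Apast_pre_disjoint A m false) (fun bb _ => (hYpi a').integrableOn)]
    rw [h1]
    calc ∑ bb ∈ Ba K m false, ∫ ω in Pre bb, Ypot' a' ω ∂P
        = ∑ bb ∈ Ba K m false, (X bb * φ0 bb +
            ∑ j : Fin K, (X bb * φ bb j) * (if a' (rev j) = true then 1 else 0)) := by
          refine Finset.sum_congr rfl fun bb _ => ?_
          rw [hφ bb a', mul_add, Finset.mul_sum]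
          congr 1
          exact Finset.sum_congr rfl fun j _ => by ring
      _ = c0 + ∑ j : Fin K, c j * (if a' (rev j) = true then 1 else 0) := by
          rw [Finset.sum_add_distrib, hc0def]
          congr 1
          rw [Finset.sum_comm]
          refine Finset.sum_congr rfl fun j _ => ?_
          rw [hcdef]
          simp only [Finset.sum_mul]
  have hc0 : c0 = ψ0 := by
    have := hrepr (fun _ => false)
    simpa using this.symm
  have hcj : ∀ j : Fin K, c j = ψ j := by
    intro j
    have h := hrepr (fun k => decide (k = rev j))
    have hsimp : ∀ d : Fin K → ℝ, ∑ j' : Fin K,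
        d j' * (if (decide ((rev j') = rev j) : Bool) = true then (1 : ℝ) else 0) = d j := by
      intro d
      have : ∀ j' : Fin K, (d j' * (if (decide ((rev j') = rev j) : Bool) = true
          then (1 : ℝ) else 0)) = (if j' = j then d j' else 0) := by
        intro j'
        by_cases hjj : j' = j
        · subst hjj; simp
        · have : rev j' ≠ rev j := fun hc => hjj (rev_injective hc)
          simp [this, hjj]
      rw [Finset.sum_congr rfl fun j' _ => this j']
      simp
    rw [hsimp ψ, hsimp c, hc0] at h
    linarith
  -- reindex Ba true via Ba false
  have hmk : ∀ bb ∈ Ba K m false,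
      (fun k : Fin K => if K - m ≤ (k : ℕ) then true else bb k) ∈ Ba K m true :=
    fun bb _ => mem_Ba.mpr fun k hk => by simp [hk]
  have hmk' : ∀ bb ∈ Ba K m true,
      (fun k : Fin K => if K - m ≤ (k : ℕ) then false else bb k) ∈ Ba K m false :=
    fun bb _ => mem_Ba.mpr fun k hk => by simp [hk]
  have hS1 : ∑ bb ∈ Ba K m true, ∫ ω in Pre bb, Ypot' bb ω ∂P =
      ∑ bb ∈ Ba K m false,
        ∫ ω in Pre bb, Ypot' (fun k => if K - m ≤ (k : ℕ) then true else bb k) ω ∂P := by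
    refine (Finset.sum_nbij' (fun bb => fun k : Fin K => if K - m ≤ (k : ℕ) then false else bb k)
      (fun bb => fun k : Fin K => if K - m ≤ (k : ℕ) then true else bb k)
      (fun bb hbb => hmk' bb hbb) (fun bb hbb => hmk bb hbb) ?_ ?_ ?_)
    · intro bb hbb
      funext k
      by_cases hk : K - m ≤ (k : ℕ)
      · simp [hk, (mem_Ba.mp hbb k hk)]
      · simp [hk]
    · intro bb hbb
      funext k
      by_cases hk : K - m ≤ (k : ℕ)
      · simp [hk, (mem_Ba.mp hbb k hk)]
      · simp [hk]
    · intro bb hbb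
      have hPreEq : Pre bb = Pre (fun k : Fin K => if K - m ≤ (k : ℕ) then false else bb k) := by
        rw [hPre]
        ext ω
        constructor <;> intro h k hk
        · have : ¬ K - m ≤ (k : ℕ) := by omega
          simp only [this, if_false]
          exact h k hk
        · have hnk : ¬ K - m ≤ (k : ℕ) := by omega
          have := h k hk
          simpa [hnk] using this
      have hfun : (fun k : Fin K => if K - m ≤ (k : ℕ) then true
          else (fun k : Fin K => if K - m ≤ (k : ℕ) then false else bb k) k) = bb := by
        funext k
        by_cases hk : K - m ≤ (k : ℕ)
        · simp only [hk, if_true]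
          exact (mem_Ba.mp hbb k hk).symm
        · simp [hk]
      rw [hPreEq, hfun]
  -- per-prefix difference
  have hdiff : ∀ bb ∈ Ba K m false,
      (∫ ω in Pre bb, Ypot' (fun k => if K - m ≤ (k : ℕ) then true else bb k) ω ∂P) -
        (∫ ω in Pre bb, Ypot' bb ω ∂P) =
      X bb * ∑ j ∈ Finset.univ.filter (fun j : Fin K => (j : ℕ) < m), φ bb j := by
    intro bb hbb
    rw [hφ bb _, hφ bb bb]
    have hterm : ∀ j : Fin K,
        (if (if K - m ≤ ((rev j : Fin K) : ℕ) then true else bb (rev j)) = true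
          then (1 : ℝ) else 0) - (if bb (rev j) = true then 1 else 0) =
        (if (j : ℕ) < m then 1 else 0) := by
      intro j
      have hrv : ((rev j : Fin K) : ℕ) = K - 1 - (j : ℕ) := rfl
      by_cases hj : (j : ℕ) < m
      · have h1 : K - m ≤ ((rev j : Fin K) : ℕ) := by
          rw [hrv]; have := j.isLt; omega
        have h2 : bb (rev j) = false := mem_Ba.mp hbb (rev j) h1
        simp [h1, h2, hj]
      · have h1 : ¬ K - m ≤ ((rev j : Fin K) : ℕ) := by
          rw [hrv]; have := j.isLt; omega
        simp [h1, hj]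
    have hthis : ∀ j : Fin K, (φ bb j * (if (if K - m ≤ ((rev j : Fin K) : ℕ) then true
        else bb (rev j)) = true then (1 : ℝ) else 0) -
        φ bb j * (if bb (rev j) = true then 1 else 0)) =
        (if (j : ℕ) < m then φ bb j else 0) := by
      intro j
      rw [← mul_sub, hterm j]
      by_cases hj : (j : ℕ) < m <;> simp [hj]
    rw [← mul_sub]
    congr 1
    rw [add_sub_add_left_eq_sub, ← Finset.sum_sub_distrib]
    rw [Finset.sum_congr rfl fun j _ => hthis j, ← Finset.sum_filter]
  -- assemble
  rw [θW, hmu true hpos1, hmu false hpos0, hS1, ← Finset.sum_sub_distrib,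
    Finset.sum_congr rfl hdiff]
  calc ∑ bb ∈ Ba K m false, X bb *
        ∑ j ∈ Finset.univ.filter (fun j : Fin K => (j : ℕ) < m), φ bb j
      = ∑ j ∈ Finset.univ.filter (fun j : Fin K => (j : ℕ) < m), c j := by
        simp only [Finset.mul_sum]
        rw [Finset.sum_comm]
      _ = ∑ j ∈ Finset.univ.filter (fun j : Fin K => (j : ℕ) < m), ψ j :=
        Finset.sum_congr rfl fun j _ => hcj j
end Aux

/-- Robustness inequality: `|θ_rsw^(m) − θ^(K)| ≥ |θ_sw^(m) − θ^(K)|`. -/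
theorem robustness_inequality
    {Ω : Type*} [MeasurableSpace Ω] {𝓛 : Type*} [MeasurableSpace 𝓛]
    [Fintype 𝓛] [Nonempty 𝓛] [MeasurableSingletonClass 𝓛]
    (P : Measure Ω) [IsProbabilityMeasure P]
    {K m : ℕ} (hK : 1 ≤ K) (hm1 : 1 ≤ m) (hmK : m ≤ K)
    (A : Fin K → Ω → Bool) (L : Fin K → Ω → 𝓛)
    (hA : ∀ k, Measurable (A k)) (hL : ∀ k, Measurable (L k))
    (Y : Ω → ℝ) (hY : Measurable Y)
    (Ypot : (Fin K → Bool) → Ω → ℝ)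
    (hYpm : ∀ a, Measurable (Ypot a)) (hYpi : ∀ a, Integrable (Ypot a) P)
    (hpos1 : 0 < P (Etr A m true)) (hpos0 : 0 < P (Etr A m false))
    (hA1 : A1ok A Y Ypot) (hA2 : A2ok P A L Ypot) (hA3 : A3ok P A L)
    (ψ0 : ℝ) (ψ : Fin K → ℝ) (hMSM : MSMeq P Ypot ψ0 ψ)
    (hA4 : (∀ j, 0 ≤ ψ j) ∨ (∀ j, ψ j ≤ 0))
    (hA5 : A5ok P A Ypot m)
    (hA6 : ∀ j : Fin K, m ≤ (j : ℕ) → 0 < qcoef P A m j ∧ qcoef P A m j < 1) :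
    |θW P A m (Wsw P A L) Y - θKfull P Ypot| ≤
      |θW P A m (Wrsw P A L m) Y - θKfull P Ypot| := by
  have hsw := theta_sw P A L hA hL m Y Ypot hYpm hYpi hpos1 hpos0 hA1 hA2 hA3 ψ0 ψ hMSM
  have hrsw := theta_rsw P A L hA hL m hm1 hmK Y Ypot hYpm hYpi hpos1 hpos0 hA1 hA2 hA3
    ψ0 ψ hMSM hA5
  have hKfull : θKfull P Ypot = ∑ j : Fin K, ψ j := by
    rw [θKfull, hMSM, hMSM]
    simp
  set T : Finset (Fin K) := Finset.univ.filter (fun j : Fin K => (j : ℕ) < m) with hT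
  set S : Finset (Fin K) := Finset.univ.filter (fun j : Fin K => ¬ (j : ℕ) < m) with hS
  have hmemS : ∀ j ∈ S, m ≤ (j : ℕ) := by
    intro j hj
    rw [hS, Finset.mem_filter] at hj
    omega
  -- values of the conditional probabilities for late treatments
  have hdT : ∀ j : Fin K, (j : ℕ) < m →
      cP P {ω | A (rev j) ω = true} (Etr A m true) = 1 ∧
      cP P {ω | A (rev j) ω = true} (Etr A m false) = 0 := by
    intro j hj
    have hkm : K - m ≤ ((rev j : Fin K) : ℕ) := by
      have : ((rev j : Fin K) : ℕ) = K - 1 - (j : ℕ) := rfl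
      rw [this]
      have := j.isLt
      omega
    constructor
    · have hset : {ω | A (rev j) ω = true} ∩ Etr A m true = Etr A m true := by
        ext ω
        simp only [Set.mem_inter_iff, Set.mem_setOf_eq, and_iff_right_iff_imp]
        intro h
        exact h (rev j) hkm
      rw [cP, hset, div_self (ENNReal.toReal_ne_zero.mpr ⟨ne_of_gt hpos1, measure_ne_top _ _⟩)]
    · have hset : {ω | A (rev j) ω = true} ∩ Etr A m false = ∅ := by
        ext ω
        simp only [Set.mem_inter_iff, Set.mem_setOf_eq, Set.mem_empty_iff_false, iff_false,
          not_and]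
        intro h1 h2
        have := h2 (rev j) hkm
        rw [h1] at this
        exact Bool.noConfusion this
      rw [cP, hset]
      simp
  have h1 : θW P A m (Wsw P A L) Y - θKfull P Ypot =
      ∑ j ∈ S, ψ j * (qcoef P A m j - 1) := by
    rw [hsw, hKfull, ← Finset.sum_sub_distrib]
    rw [← Finset.sum_filter_add_sum_filter_not Finset.univ (fun j : Fin K => (j : ℕ) < m)
      (fun j => ψ j * (cP P {ω | A (rev j) ω = true} (Etr A m true) -
        cP P {ω | A (rev j) ω = true} (Etr A m false)) - ψ j)]
    have hTzero : ∑ j ∈ T, (ψ j * (cP P {ω | A (rev j) ω = true} (Etr A m true) -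
        cP P {ω | A (rev j) ω = true} (Etr A m false)) - ψ j) = 0 := by
      refine Finset.sum_eq_zero fun j hj => ?_
      rw [hT, Finset.mem_filter] at hj
      rw [(hdT j hj.2).1, (hdT j hj.2).2]
      ring
    rw [hTzero, zero_add]
    refine Finset.sum_congr rfl fun j hj => ?_
    rw [qcoef]
    ring
  have h2 : θW P A m (Wrsw P A L m) Y - θKfull P Ypot = -∑ j ∈ S, ψ j := by
    rw [hrsw, hKfull,
      ← Finset.sum_filter_add_sum_filter_not Finset.univ (fun j : Fin K => (j : ℕ) < m) ψ]
    ring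
  rw [h1, h2]
  have hid : ∑ j ∈ S, ψ j * (qcoef P A m j - 1) =
      (∑ j ∈ S, ψ j * qcoef P A m j) - ∑ j ∈ S, ψ j := by
    simp only [mul_sub, mul_one]
    rw [Finset.sum_sub_distrib]
  rcases hA4 with hsgn | hsgn
  · have hq0 : 0 ≤ ∑ j ∈ S, ψ j * qcoef P A m j :=
      Finset.sum_nonneg fun j hj => mul_nonneg (hsgn j) (hA6 j (hmemS j hj)).1.le
    have hq1 : ∑ j ∈ S, ψ j * qcoef P A m j ≤ ∑ j ∈ S, ψ j :=
      Finset.sum_le_sum fun j hj => by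
        have := (hA6 j (hmemS j hj)).2
        nlinarith [hsgn j]
    have hψ0 : 0 ≤ ∑ j ∈ S, ψ j := Finset.sum_nonneg fun j _ => hsgn j
    rw [hid, abs_of_nonpos (by linarith), abs_neg, abs_of_nonneg hψ0]
    linarith
  · have hq0 : ∑ j ∈ S, ψ j * qcoef P A m j ≤ 0 :=
      Finset.sum_nonpos fun j hj => mul_nonpos_of_nonpos_of_nonneg (hsgn j)
        (hA6 j (hmemS j hj)).1.le
    have hq1 : ∑ j ∈ S, ψ j ≤ ∑ j ∈ S, ψ j * qcoef P A m j :=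
      Finset.sum_le_sum fun j hj => by
        have := (hA6 j (hmemS j hj)).2
        nlinarith [hsgn j]
    have hψ0 : ∑ j ∈ S, ψ j ≤ 0 := Finset.sum_nonpos fun j _ => hsgn j
    rw [hid, abs_of_nonneg (by linarith), abs_neg, abs_of_nonpos hψ0]
    linarith

end MSMPaper
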